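/- If a workflow net N is not continuously sound, then N is not generalised sound. That is, continuous soundness is a necessary condition for generalised soundness. -/

import Mathlib

structure PetriNet (P T : Type) [Fintype P] [Fintype T] where
  pre : T → P → ℕ
  post : T → P → ℕ

variable {P T : Type} [Fintype P] [Fintype T] [DecidableEq P]

namespace PetriNet

def enabled (N : PetriNet P T) (t : T) (m : P → ℕ) : Prop := ∀ p, N.pre t p ≤ m p

def fires (N : PetriNet P T) (m m' : P → ℕ) : Prop :=
  ∃ t, N.enabled t m ∧ ∀ p, m' p = m p + N.post t p - N.pre t p

def reach (N : PetriNet P T) : (P → ℕ) → (P → ℕ) → Prop := Relation.ReflTransGen N.fires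

def zfires (N : PetriNet P T) (m m' : P → ℤ) : Prop :=
  ∃ t, ∀ p, m' p = m p + (N.post t p : ℤ) - (N.pre t p : ℤ)

def zreach (N : PetriNet P T) : (P → ℤ) → (P → ℤ) → Prop := Relation.ReflTransGen N.zfires

def cfires (N : PetriNet P T) (m m' : P → ℚ) : Prop :=
  ∃ t, ∃ l : ℚ, 0 < l ∧ l ≤ 1 ∧ (∀ p, l * (N.pre t p : ℚ) ≤ m p) ∧
    ∀ p, m' p = m p + l * ((N.post t p : ℚ) - (N.pre t p : ℚ))

def creach (N : PetriNet P T) : (P → ℚ) → (P → ℚ) → Prop := Relation.ReflTransGen N.cfires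

def bounded (N : PetriNet P T) (m : P → ℕ) : Prop :=
  ∃ b : ℕ, ∀ m', N.reach m m' → ∀ p, m' p ≤ b

def zbounded (N : PetriNet P T) (m : P → ℕ) : Prop :=
  ∃ b : ℕ, ∀ m' : P → ℤ, N.zreach (fun p => (m p : ℤ)) m' → (∀ p, 0 ≤ m' p) →
    ∀ p, m' p ≤ (b : ℤ)

def quasiLive (N : PetriNet P T) (m : P → ℕ) (t : T) : Prop :=
  ∃ m', N.reach m m' ∧ N.enabled t m'

def live (N : PetriNet P T) (m : P → ℕ) (t : T) : Prop :=
  ∀ m', N.reach m m' → N.quasiLive m' t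

def freeChoice (N : PetriNet P T) : Prop :=
  ∀ s t : T, (∀ p, N.pre s p = 0 ∨ N.pre t p = 0) ∨ N.pre s = N.pre t

def edge (N : PetriNet P T) : (P ⊕ T) → (P ⊕ T) → Prop
  | Sum.inl p, Sum.inr t => 0 < N.pre t p
  | Sum.inr t, Sum.inl p => 0 < N.post t p
  | _, _ => False

end PetriNet

/-- The marking with `k` tokens in place `p` and none elsewhere. -/
def mk1 (p : P) (k : ℕ) : P → ℕ := fun q => if q = p then k else 0

/-- The continuous marking with `k` tokens in place `p` and none elsewhere. -/
def mkQ (p : P) (k : ℚ) : P → ℚ := fun q => if q = p then k else 0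

structure WorkflowNet (P T : Type) [Fintype P] [Fintype T] extends PetriNet P T where
  i : P
  f : P
  i_ne_f : i ≠ f
  no_into_initial : ∀ t, toPetriNet.post t i = 0
  no_from_final : ∀ t, toPetriNet.pre t f = 0
  place_on_path : ∀ p : P,
    Relation.ReflTransGen toPetriNet.edge (Sum.inl i) (Sum.inl p) ∧
    Relation.ReflTransGen toPetriNet.edge (Sum.inl p) (Sum.inl f)
  trans_on_path : ∀ t : T,
    Relation.ReflTransGen toPetriNet.edge (Sum.inl i) (Sum.inr t) ∧
    Relation.ReflTransGen toPetriNet.edge (Sum.inr t) (Sum.inl f)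

/-- `k`-soundness of a workflow net. -/
def WorkflowNet.ksound (N : WorkflowNet P T) (k : ℕ) : Prop :=
  ∀ m, N.toPetriNet.reach (mk1 N.i k) m → N.toPetriNet.reach m (mk1 N.f k)

/-- Continuous soundness of a workflow net. -/
def WorkflowNet.csound (N : WorkflowNet P T) : Prop :=
  ∀ m : P → ℚ, N.toPetriNet.creach (mkQ N.i 1) m → N.toPetriNet.creach m (mkQ N.f 1)

/-- For a nonneg rational, scaling by the denominator gives a natural number. -/
lemma rat_den_mul (q : ℚ) (hq : 0 ≤ q) : ((q.num.toNat : ℚ)) = (q.den : ℚ) * q := by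
  have hd : ((q.den : ℚ)) ≠ 0 := by exact_mod_cast q.den_nz
  have h0 : (q.num.toNat : ℤ) = q.num := Int.toNat_of_nonneg (Rat.num_nonneg.mpr hq)
  have hnum : ((q.num.toNat : ℚ)) = (q.num : ℚ) := by exact_mod_cast h0
  have h := (div_eq_iff hd).mp (Rat.num_div_den q)
  rw [hnum, h]
  ring

/-- A finite family of nonneg rationals can be simultaneously scaled to naturals. -/
lemma exists_nat_scale (x : P → ℚ) (hx : ∀ p, 0 ≤ x p) :
    ∃ b : ℕ, 0 < b ∧ ∃ X : P → ℕ, ∀ p, (X p : ℚ) = b * x p := by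
  classical
  refine ⟨∏ p : P, (x p).den, ?_, ?_⟩
  · exact Finset.prod_pos fun p _ => (x p).pos
  · refine ⟨fun p => (∏ q ∈ Finset.univ.erase p, (x q).den) * (x p).num.toNat, fun p => ?_⟩
    have hsplit : (∏ q : P, (x q).den) = (x p).den * ∏ q ∈ Finset.univ.erase p, (x q).den := by
      rw [mul_comm, Finset.prod_erase_mul _ _ (Finset.mem_univ p)]
    rw [hsplit, Nat.cast_mul, Nat.cast_mul, rat_den_mul (x p) (hx p)]
    push_cast
    ring

/-- Firing a transition `k` times in a row. -/
lemma fire_many (N : PetriNet P T) (t : T) :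
    ∀ (k : ℕ) (M : P → ℕ), (∀ p, k * N.pre t p ≤ M p) →
      N.reach M (fun p => M p + k * N.post t p - k * N.pre t p) := by
  intro k
  induction k with
  | zero =>
    intro M _
    have : (fun p => M p + 0 * N.post t p - 0 * N.pre t p) = M := by
      funext p; simp
    rw [this]
    exact Relation.ReflTransGen.refl
  | succ k ih =>
    intro M h
    have hen : N.enabled t M := by
      intro p
      have := h p
      have e1 : (k+1) * N.pre t p = k * N.pre t p + N.pre t p := by ring
      omega
    have hstep : N.fires M (fun p => M p + N.post t p - N.pre t p) :=
      ⟨t, hen, fun p => rfl⟩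
    have h1 : ∀ p, k * N.pre t p ≤ M p + N.post t p - N.pre t p := by
      intro p
      have := h p
      have hp := hen p
      have e1 : (k+1) * N.pre t p = k * N.pre t p + N.pre t p := by ring
      omega
    have htail := ih (fun p => M p + N.post t p - N.pre t p) h1
    refine Relation.ReflTransGen.head hstep ?_
    unfold PetriNet.reach at htail
    convert htail using 1
    funext p
    have hp := h p
    have hq := hen p
    simp only [Nat.succ_mul] at hp ⊢
    omega

/-- Scaling a discrete run by a positive factor. -/
lemma reach_smul (N : PetriNet P T) {X Y : P → ℕ} (h : N.reach X Y) (c : ℕ) :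
    N.reach (fun p => c * X p) (fun p => c * Y p) := by
  induction h with
  | refl => exact Relation.ReflTransGen.refl
  | tail _ hstep ih =>
    rename_i Y' Y hYY'
    obtain ⟨t, hen, heq⟩ := hstep
    have hpre : ∀ p, c * N.pre t p ≤ c * Y' p := fun p =>
      Nat.mul_le_mul_left c (hen p)
    have hmany := fire_many N t c (fun p => c * Y' p) hpre
    refine Relation.ReflTransGen.trans ih ?_
    unfold PetriNet.reach at hmany
    convert hmany using 1
    funext p
    have h1 := hen p
    have h2 := heq p
    have key : Y p + N.pre t p = Y' p + N.post t p := by omega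
    have key2 : c * Y p + c * N.pre t p = c * Y' p + c * N.post t p := by
      rw [← Nat.mul_add, ← Nat.mul_add, key]
    omega

/-- Continuous reachability preserves nonnegativity. -/
lemma creach_nonneg (N : PetriNet P T) {x y : P → ℚ} (h : N.creach x y)
    (hx : ∀ p, 0 ≤ x p) : ∀ p, 0 ≤ y p := by
  induction h with
  | refl => exact hx
  | tail _ hstep ih =>
    obtain ⟨t, l, hl0, _, hlpre, heq⟩ := hstep
    intro p
    rw [heq p]
    have h1 := hlpre p
    have h2 : (0:ℚ) ≤ l * N.post t p := by positivity
    nlinarith [ih p]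

/-- Scaling up: a continuous run yields a discrete run for some positive factor. -/
lemma creach_scale_up (N : PetriNet P T) {x y : P → ℚ} (h : N.creach x y)
    (hx : ∀ p, 0 ≤ x p) :
    ∃ b : ℕ, 0 < b ∧ ∃ X Y : P → ℕ,
      (∀ p, (X p : ℚ) = b * x p) ∧ (∀ p, (Y p : ℚ) = b * y p) ∧ N.reach X Y := by
  induction h with
  | refl =>
    obtain ⟨b, hb, X, hX⟩ := exists_nat_scale x hx
    exact ⟨b, hb, X, X, hX, hX, Relation.ReflTransGen.refl⟩
  | tail hpref hstep ih =>
    rename_i y' y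
    obtain ⟨b, hb, X, Y', hX, hY', hreach⟩ := ih
    have hy' : ∀ p, 0 ≤ y' p := creach_nonneg N hpref hx
    obtain ⟨t, l, hl0, hl1, hlpre, heq⟩ := hstep
    set d : ℕ := l.den with hd
    set k : ℕ := l.num.toNat with hk
    have hdpos : 0 < d := l.pos
    have hkQ : (k : ℚ) = (d : ℚ) * l := rat_den_mul l (le_of_lt hl0)
    have hkpos : 0 < k := by
      have hn := Rat.num_pos.mpr hl0
      omega
    set B : ℕ := b * d with hB
    have hBpos : 0 < B := Nat.mul_pos hb hdpos
    -- scaled prefix run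
    have hreachB := reach_smul N hreach d
    -- the k*b firings of t
    have hpreineq : ∀ p, (b * k) * N.pre t p ≤ d * Y' p := by
      intro p
      have h1 := hlpre p
      have hQ : ((b * k * N.pre t p : ℕ) : ℚ) ≤ ((d * Y' p : ℕ) : ℚ) := by
        push_cast
        rw [hY' p, hkQ]
        have hb0 : (0:ℚ) ≤ (b:ℚ) := by positivity
        have hd0 : (0:ℚ) ≤ (d:ℚ) := by positivity
        nlinarith [mul_le_mul_of_nonneg_left h1 (mul_nonneg hb0 hd0)]
      exact_mod_cast hQ
    have hmany := fire_many N t (b * k) (fun p => d * Y' p) hpreineq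
    refine ⟨B, hBpos, (fun p => d * X p), (fun p => d * Y' p + (b*k) * N.post t p - (b*k) * N.pre t p), ?_, ?_, ?_⟩
    · intro p
      push_cast
      rw [hX p, hB]
      push_cast
      ring
    · intro p
      have hle : (b*k) * N.pre t p ≤ d * Y' p + (b*k) * N.post t p :=
        le_trans (hpreineq p) (Nat.le_add_right _ _)
      rw [Nat.cast_sub hle]
      push_cast
      rw [hY' p, heq p, hB]
      push_cast
      linear_combination ((b:ℚ) * (N.post t p : ℚ) - (b:ℚ) * (N.pre t p : ℚ)) * hkQ
    · exact Relation.ReflTransGen.trans hreachB hmany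

/-- Scaling down: a discrete run yields a continuous run after dividing. -/
lemma reach_scale_down (N : PetriNet P T) {X Y : P → ℕ} (h : N.reach X Y)
    (c : ℕ) (hc : 0 < c) :
    N.creach (fun p => (X p : ℚ) / c) (fun p => (Y p : ℚ) / c) := by
  have hcq : (0:ℚ) < (c:ℚ) := by exact_mod_cast hc
  induction h with
  | refl => exact Relation.ReflTransGen.refl
  | tail _ hstep ih =>
    rename_i Y' Y hYY'
    obtain ⟨t, hen, heq⟩ := hstep
    refine Relation.ReflTransGen.tail ih ⟨t, 1 / c, by positivity, ?_, ?_, ?_⟩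
    · rw [div_le_one hcq]
      exact_mod_cast hc
    · intro p
      rw [div_mul_eq_mul_div, div_le_div_iff₀ (by positivity) hcq]
      have := hen p
      have : (N.pre t p : ℚ) ≤ (Y' p : ℚ) := by exact_mod_cast this
      nlinarith
    · intro p
      have h1 := hen p
      have h2 := heq p
      have hle : N.pre t p ≤ Y' p + N.post t p := le_trans h1 (Nat.le_add_right _ _)
      have : (Y p : ℚ) = (Y' p : ℚ) + N.post t p - N.pre t p := by
        rw [h2, Nat.cast_sub hle]
        push_cast
        ring
      simp only
      rw [this]
      field_simp
      ring

theorem stmt3 (N : WorkflowNet P T) (h : ¬ N.csound) :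
    ¬ ∀ k : ℕ, 1 ≤ k → N.ksound k := by
  intro hgs
  rw [WorkflowNet.csound] at h
  push_neg at h
  obtain ⟨m, hm1, hm2⟩ := h
  have hinit_nonneg : ∀ p, 0 ≤ mkQ N.i (1:ℚ) p := by
    intro p
    unfold mkQ
    split <;> norm_num
  obtain ⟨b, hb, X, Y, hX, hY, hreach⟩ := creach_scale_up N.toPetriNet hm1 hinit_nonneg
  have hXmk : X = mk1 N.i b := by
    funext p
    have := hX p
    unfold mkQ at this
    unfold mk1
    split
    · rename_i hp
      rw [if_pos hp] at this
      exact_mod_cast (by linarith [this] : (X p : ℚ) = (b:ℚ))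
    · rename_i hp
      rw [if_neg hp] at this
      exact_mod_cast (by linarith [this] : (X p : ℚ) = 0)
  rw [hXmk] at hreach
  have hsound := hgs b hb Y hreach
  have hdown := reach_scale_down N.toPetriNet hsound b hb
  have hbq : (0:ℚ) < (b:ℚ) := by exact_mod_cast hb
  have hYm : (fun p => (Y p : ℚ) / b) = m := by
    funext p
    rw [hY p]
    field_simp
  have hfm : (fun p => ((mk1 N.f b p : ℕ) : ℚ) / b) = mkQ N.f 1 := by
    funext p
    unfold mk1 mkQ
    split
    · field_simp
    · simp
  rw [hYm, hfm] at hdown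
  exact hm2 hdown
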